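/- Let l > 0, k > 0, and k̃ > 0 real. Let f ∈ L²(ℝ) with support contained in Ω = [−l, l]. Let σ: ℝ → ℝ be nonnegative with σ = 0 on [−l, l], let η(x) = |∫₀ˣ σ(t) dt|, and let z = z₁ + i z₂ with z₁ ≥ 0, z₂ > 0. Define x̃ = x + (z/k) ∫₀ˣ σ(t) dt, and define the PML-continued averaged solution for |x| > l by u^a(x̃) = ∫_{−l}^{l} G_{x̃}(y) f(y) dy, where G_{x̃}(y) = − e^{i k̃ (x̃ − y)}/(2 i k̃) when x > l and G_{x̃}(y) = − e^{−i k̃ (x̃ − y)}/(2 i k̃) when x < −l. Then for all |x| > l, |u^a(x̃)| ≤ (√l / (√2 · k̃)) · e^{−(k̃/k) z₂ η(x)} · ‖f‖_{L²(Ω)}. -/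

import Mathlib

open MeasureTheory

/-- Theorem 3.1, case 1 (real `k̃ > 0`), bound for the averaged solution: with the PML
stretching `x̃ = x + (z/k)∫₀ˣ σ`, `z = z₁ + i z₂` (`z₁ ≥ 0`, `z₂ > 0`), for `|x| > l`,
`|u^a(x̃)| ≤ (√l/(√2 k̃)) e^{−(k̃/k) z₂ η(x)} ‖f‖_{L²(Ω)}` where `η(x) = |∫₀ˣ σ|`. -/
theorem pml_decay_averaged_real_wavenumber (l k ktilde : ℝ) (hl : 0 < l) (hk : 0 < k)
    (hkt : 0 < ktilde)
    (f : ℝ → ℂ) (hf : MemLp f 2 volume)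
    (hsupp : ∀ x : ℝ, x ∉ Set.Icc (-l) l → f x = 0)
    (σ : ℝ → ℝ) (hσint : LocallyIntegrable σ) (hσnn : ∀ t : ℝ, 0 ≤ σ t)
    (hσ0 : ∀ t ∈ Set.Icc (-l) l, σ t = 0)
    (z₁ z₂ : ℝ) (hz₁ : 0 ≤ z₁) (hz₂ : 0 < z₂) :
    ∀ x : ℝ, l < |x| →
      ‖∫ y in (-l)..l,
          (if l < x then
            -Complex.exp (Complex.I * (ktilde : ℂ) *
              (((x : ℂ) + (((z₁ : ℂ) + (z₂ : ℂ) * Complex.I) / (k : ℂ)) *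
                ((∫ t in (0:ℝ)..x, σ t : ℝ) : ℂ)) - (y : ℂ))) / (2 * Complex.I * (ktilde : ℂ))
          else
            -Complex.exp (-Complex.I * (ktilde : ℂ) *
              (((x : ℂ) + (((z₁ : ℂ) + (z₂ : ℂ) * Complex.I) / (k : ℂ)) *
                ((∫ t in (0:ℝ)..x, σ t : ℝ) : ℂ)) - (y : ℂ))) / (2 * Complex.I * (ktilde : ℂ)))
          * f y‖
        ≤ (Real.sqrt l / (Real.sqrt 2 * ktilde)) *
            Real.exp (-(ktilde / k) * z₂ * |∫ t in (0:ℝ)..x, σ t|) *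
            Real.sqrt (∫ y in (-l)..l, ‖f y‖ ^ 2) := by
  intro x hx
  set η : ℝ := ∫ t in (0:ℝ)..x, σ t with hη
  have hle : (-l) ≤ l := by linarith
  set C : ℝ := Real.exp (-(ktilde / k) * z₂ * |η|) / (2 * ktilde) with hC
  have hCnn : 0 ≤ C := by positivity
  -- sign of η according to the position of x
  have hηsign : (l < x ∧ 0 ≤ η) ∨ (x < -l ∧ η ≤ 0) := by
    rcases lt_or_ge l x with h | h
    · exact Or.inl ⟨h, intervalIntegral.integral_nonneg (by linarith) fun t _ => hσnn t⟩
    · have hx' : x < -l := by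
        rcases le_or_gt 0 x with h0 | h0
        · rw [abs_of_nonneg h0] at hx; linarith
        · rw [abs_of_neg h0] at hx; linarith
      refine Or.inr ⟨hx', ?_⟩
      have : (0:ℝ) ≤ ∫ t in x..(0:ℝ), σ t :=
        intervalIntegral.integral_nonneg (by linarith) fun t _ => hσnn t
      rw [hη, intervalIntegral.integral_symm]
      linarith
  have hden : ‖2 * Complex.I * (ktilde : ℂ)‖ = 2 * ktilde := by
    simp [abs_of_pos hkt]
  -- pointwise absolute value of the Green kernel
  have habs : ∀ y : ℝ, ‖(if l < x then
            -Complex.exp (Complex.I * (ktilde : ℂ) *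
              (((x : ℂ) + (((z₁ : ℂ) + (z₂ : ℂ) * Complex.I) / (k : ℂ)) *
                ((η : ℝ) : ℂ)) - (y : ℂ))) / (2 * Complex.I * (ktilde : ℂ))
          else
            -Complex.exp (-Complex.I * (ktilde : ℂ) *
              (((x : ℂ) + (((z₁ : ℂ) + (z₂ : ℂ) * Complex.I) / (k : ℂ)) *
                ((η : ℝ) : ℂ)) - (y : ℂ))) / (2 * Complex.I * (ktilde : ℂ)))
          * f y‖ = C * ‖f y‖ := by
    intro y
    rw [norm_mul]
    congr 1
    rcases hηsign with ⟨hxl, hηnn⟩ | ⟨hxl, hηnp⟩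
    · rw [if_pos hxl, norm_div, norm_neg, Complex.norm_exp, hden]
      have hre : (Complex.I * (ktilde : ℂ) *
          (((x : ℂ) + (((z₁ : ℂ) + (z₂ : ℂ) * Complex.I) / (k : ℂ)) *
            ((η : ℝ) : ℂ)) - (y : ℂ))).re = -(ktilde / k) * z₂ * η := by
        simp [Complex.mul_re, Complex.mul_im, Complex.add_re, Complex.add_im,
          Complex.sub_re, Complex.sub_im, Complex.div_re, Complex.div_im,
          Complex.normSq_ofReal, Complex.ofReal_re, Complex.ofReal_im]
        field_simp
      rw [hre, hC, abs_of_nonneg hηnn]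
    · rw [if_neg (by linarith), norm_div, norm_neg, Complex.norm_exp, hden]
      have hre : (-Complex.I * (ktilde : ℂ) *
          (((x : ℂ) + (((z₁ : ℂ) + (z₂ : ℂ) * Complex.I) / (k : ℂ)) *
            ((η : ℝ) : ℂ)) - (y : ℂ))).re = (ktilde / k) * z₂ * η := by
        simp [Complex.mul_re, Complex.mul_im, Complex.add_re, Complex.add_im,
          Complex.sub_re, Complex.sub_im, Complex.div_re, Complex.div_im,
          Complex.normSq_ofReal, Complex.ofReal_re, Complex.ofReal_im]
        field_simp
      rw [hre, hC, abs_of_nonpos hηnp]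
      ring_nf
  -- Cauchy–Schwarz on [-l, l]
  set μ : Measure ℝ := volume.restrict (Set.Ioc (-l) l) with hμ
  haveI : IsFiniteMeasure μ := by
    constructor
    rw [hμ, Measure.restrict_apply_univ, Real.volume_Ioc]
    exact ENNReal.ofReal_lt_top
  have hfm : MemLp (fun y => ‖f y‖) (ENNReal.ofReal 2) μ := by
    have := (hf.norm).restrict (Set.Ioc (-l) l)
    simpa [ENNReal.ofReal_ofNat] using this
  have hgm : MemLp (fun _ : ℝ => (1:ℝ)) (ENNReal.ofReal 2) μ := memLp_const 1
  have hCS : ∫ y, ‖f y‖ * 1 ∂μ ≤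
      (∫ y, ‖f y‖ ^ (2:ℝ) ∂μ) ^ (1/(2:ℝ)) *
      (∫ y, (1:ℝ) ^ (2:ℝ) ∂μ) ^ (1/(2:ℝ)) :=
    integral_mul_le_Lp_mul_Lq_of_nonneg (Real.HolderConjugate.two_two : (2:ℝ).HolderConjugate 2)
      (Filter.Eventually.of_forall fun y => norm_nonneg _)
      (Filter.Eventually.of_forall fun _ => zero_le_one) hfm hgm
  have hone : (∫ y, (1:ℝ) ^ (2:ℝ) ∂μ) ^ (1/(2:ℝ)) = Real.sqrt 2 * Real.sqrt l := by
    have : ∫ y, (1:ℝ) ^ (2:ℝ) ∂μ = 2 * l := by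
      rw [hμ]
      simp [Real.volume_Ioc]
      rw [max_eq_left (by linarith)]
      ring
    rw [this, ← Real.sqrt_eq_rpow, Real.sqrt_mul (by norm_num)]
  have hsq : (∫ y, ‖f y‖ ^ (2:ℝ) ∂μ) ^ (1/(2:ℝ)) =
      Real.sqrt (∫ y in (-l)..l, ‖f y‖ ^ 2) := by
    rw [← Real.sqrt_eq_rpow, intervalIntegral.integral_of_le hle]
    norm_num [Real.rpow_natCast]
    rfl
  have key : ∫ y in (-l)..l, ‖f y‖ ≤
      Real.sqrt 2 * Real.sqrt l * Real.sqrt (∫ y in (-l)..l, ‖f y‖ ^ 2) := by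
    rw [intervalIntegral.integral_of_le hle]
    calc ∫ y in Set.Ioc (-l) l, ‖f y‖ = ∫ y, ‖f y‖ * 1 ∂μ := by
          simp [hμ]
      _ ≤ _ := hCS
      _ = Real.sqrt 2 * Real.sqrt l * Real.sqrt (∫ y in (-l)..l, ‖f y‖ ^ 2) := by
          rw [hone, hsq]; ring
  -- put everything together
  calc ‖∫ y in (-l)..l,
          (if l < x then
            -Complex.exp (Complex.I * (ktilde : ℂ) *
              (((x : ℂ) + (((z₁ : ℂ) + (z₂ : ℂ) * Complex.I) / (k : ℂ)) *
                ((η : ℝ) : ℂ)) - (y : ℂ))) / (2 * Complex.I * (ktilde : ℂ))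
          else
            -Complex.exp (-Complex.I * (ktilde : ℂ) *
              (((x : ℂ) + (((z₁ : ℂ) + (z₂ : ℂ) * Complex.I) / (k : ℂ)) *
                ((η : ℝ) : ℂ)) - (y : ℂ))) / (2 * Complex.I * (ktilde : ℂ)))
          * f y‖
      ≤ ∫ y in (-l)..l, ‖(if l < x then
            -Complex.exp (Complex.I * (ktilde : ℂ) *
              (((x : ℂ) + (((z₁ : ℂ) + (z₂ : ℂ) * Complex.I) / (k : ℂ)) *
                ((η : ℝ) : ℂ)) - (y : ℂ))) / (2 * Complex.I * (ktilde : ℂ))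
          else
            -Complex.exp (-Complex.I * (ktilde : ℂ) *
              (((x : ℂ) + (((z₁ : ℂ) + (z₂ : ℂ) * Complex.I) / (k : ℂ)) *
                ((η : ℝ) : ℂ)) - (y : ℂ))) / (2 * Complex.I * (ktilde : ℂ)))
          * f y‖ := by
        simpa using
          intervalIntegral.norm_integral_le_integral_norm (f := fun y => (if l < x then
            -Complex.exp (Complex.I * (ktilde : ℂ) *
              (((x : ℂ) + (((z₁ : ℂ) + (z₂ : ℂ) * Complex.I) / (k : ℂ)) *
                ((η : ℝ) : ℂ)) - (y : ℂ))) / (2 * Complex.I * (ktilde : ℂ))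
          else
            -Complex.exp (-Complex.I * (ktilde : ℂ) *
              (((x : ℂ) + (((z₁ : ℂ) + (z₂ : ℂ) * Complex.I) / (k : ℂ)) *
                ((η : ℝ) : ℂ)) - (y : ℂ))) / (2 * Complex.I * (ktilde : ℂ))) * f y) hle
    _ = ∫ y in (-l)..l, C * ‖f y‖ :=
        intervalIntegral.integral_congr fun y _ => habs y
    _ = C * ∫ y in (-l)..l, ‖f y‖ := intervalIntegral.integral_const_mul _ _
    _ ≤ C * (Real.sqrt 2 * Real.sqrt l * Real.sqrt (∫ y in (-l)..l, ‖f y‖ ^ 2)) :=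
        mul_le_mul_of_nonneg_left key hCnn
    _ = (Real.sqrt l / (Real.sqrt 2 * ktilde)) *
            Real.exp (-(ktilde / k) * z₂ * |η|) *
            Real.sqrt (∫ y in (-l)..l, ‖f y‖ ^ 2) := by
        rw [hC]
        have h2 : Real.sqrt 2 * Real.sqrt 2 = 2 := Real.mul_self_sqrt (by norm_num)
        field_simp
        linear_combination (Real.sqrt (∫ y in (-l)..l, ‖f y‖ ^ 2)) * h2
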